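/- Fix θ = (θ₁, θ₂) ∈ ℝ² and define s_θ : ℝ³ → ℝ³ by s_θ(x) = (θ₁(1 − tanh² x₁), θ₂(1 − tanh² x₂), 0) − x, and define h_θ : ℝ³ × ℝ³ → ℝ by h_θ(x, x̃) = ⟨s_θ(x), s_θ(x̃)⟩·(1 + ‖x − x̃‖²)^{−1/2} + (1 + ‖x − x̃‖²)^{−3/2}·⟨s_θ(x̃) − s_θ(x), x − x̃⟩ + (−3(1 + ‖x − x̃‖²)^{−5/2}·‖x − x̃‖² + 3(1 + ‖x − x̃‖²)^{−3/2}). Then for all x, x̃ ∈ ℝ³, h_θ(x, x̃) ≥ −((‖θ‖ + ‖s_θ(x̃)‖ + 1)·‖s_θ(x̃)‖ + ‖θ‖ + 1), where ‖θ‖ denotes the Euclidean norm of (θ₁, θ₂). -/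

import Mathlib

open scoped RealInnerProductSpace

/-- The score function of the intractable model
`p_θ(x) ∝ exp(θ₁ tanh x₁ + θ₂ tanh x₂ - ‖x‖²/2)` on `ℝ³`:
`s_θ(x) = (θ₁ (1 - tanh² x₁), θ₂ (1 - tanh² x₂), 0) - x`. -/
noncomputable def intractableScore (θ₁ θ₂ : ℝ) (x : EuclideanSpace ℝ (Fin 3)) :
    EuclideanSpace ℝ (Fin 3) :=
  WithLp.toLp 2 fun i =>
    (if i = 0 then θ₁ * (1 - Real.tanh (x 0) ^ 2)
     else if i = 1 then θ₂ * (1 - Real.tanh (x 1) ^ 2) else 0) - x i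

lemma tanh_sq_le_one' (t : ℝ) : Real.tanh t ^ 2 ≤ 1 := by
  rw [Real.tanh_eq_sinh_div_cosh, div_pow, div_le_one (pow_pos (Real.cosh_pos t) 2)]
  nlinarith [Real.cosh_sq_sub_sinh_sq t]

lemma score_diff_norm_le (θ₁ θ₂ : ℝ) (x y : EuclideanSpace ℝ (Fin 3)) :
    ‖intractableScore θ₁ θ₂ x - intractableScore θ₁ θ₂ y + (x - y)‖ ≤
      Real.sqrt (θ₁ ^ 2 + θ₂ ^ 2) := by
  set v : EuclideanSpace ℝ (Fin 3) :=
    intractableScore θ₁ θ₂ x - intractableScore θ₁ θ₂ y + (x - y) with hv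
  have hv0 : v 0 = θ₁ * (1 - Real.tanh (x 0) ^ 2) - θ₁ * (1 - Real.tanh (y 0) ^ 2) := by
    simp [hv, intractableScore]
    ring
  have hv1 : v 1 = θ₂ * (1 - Real.tanh (x 1) ^ 2) - θ₂ * (1 - Real.tanh (y 1) ^ 2) := by
    simp [hv, intractableScore]
    ring
  have hv2 : v 2 = 0 := by
    simp [hv, intractableScore]
  rw [EuclideanSpace.norm_eq]
  apply Real.sqrt_le_sqrt
  rw [Fin.sum_univ_three, hv0, hv1, hv2]
  have h1 := tanh_sq_le_one' (x 0)
  have h2 := tanh_sq_le_one' (y 0)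
  have h3 := tanh_sq_le_one' (x 1)
  have h4 := tanh_sq_le_one' (y 1)
  have h5 := sq_nonneg (Real.tanh (x 0))
  have h6 := sq_nonneg (Real.tanh (y 0))
  have h7 := sq_nonneg (Real.tanh (x 1))
  have h8 := sq_nonneg (Real.tanh (y 1))
  simp only [Real.norm_eq_abs, sq_abs]
  have c1 : (Real.tanh (x 0) ^ 2 - Real.tanh (y 0) ^ 2) ^ 2 ≤ 1 := by nlinarith
  have c2 : (Real.tanh (x 1) ^ 2 - Real.tanh (y 1) ^ 2) ^ 2 ≤ 1 := by nlinarith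
  nlinarith [mul_le_mul_of_nonneg_left c1 (sq_nonneg θ₁),
    mul_le_mul_of_nonneg_left c2 (sq_nonneg θ₂)]

/-- For the intractable model on `ℝ³` with score `s_θ`, the Langevin Stein kernel with IMQ
base kernel (dimension `d = 3`) satisfies
`h_θ(x, y) ≥ -((‖θ‖ + ‖s_θ(y)‖ + 1) ‖s_θ(y)‖ + ‖θ‖ + 1)` for all `x, y`, where `y` plays
the role of `x̃` and `‖θ‖ = √(θ₁² + θ₂²)`. -/
theorem intractable_stein_kernel_lower_bound (θ₁ θ₂ : ℝ)
    (s : EuclideanSpace ℝ (Fin 3) → EuclideanSpace ℝ (Fin 3))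
    (hs : ∀ x, s x = intractableScore θ₁ θ₂ x)
    (h : EuclideanSpace ℝ (Fin 3) → EuclideanSpace ℝ (Fin 3) → ℝ)
    (hh : ∀ x y, h x y =
      ⟪s x, s y⟫ * (1 + ‖x - y‖ ^ 2) ^ (-(1 / 2) : ℝ)
        + (1 + ‖x - y‖ ^ 2) ^ (-(3 / 2) : ℝ) * ⟪s y - s x, x - y⟫
        + (-3 * (1 + ‖x - y‖ ^ 2) ^ (-(5 / 2) : ℝ) * ‖x - y‖ ^ 2
            + 3 * (1 + ‖x - y‖ ^ 2) ^ (-(3 / 2) : ℝ))) :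
    ∀ x y,
      -((Real.sqrt (θ₁ ^ 2 + θ₂ ^ 2) + ‖s y‖ + 1) * ‖s y‖
          + Real.sqrt (θ₁ ^ 2 + θ₂ ^ 2) + 1) ≤ h x y := by
  intro x y
  rw [hh]
  set T : ℝ := Real.sqrt (θ₁ ^ 2 + θ₂ ^ 2) with hTdef
  set b : ℝ := ‖s y‖ with hbdef
  set r : ℝ := ‖x - y‖ with hrdef
  set u : ℝ := 1 + r ^ 2 with hudef
  have hT : 0 ≤ T := Real.sqrt_nonneg _
  have hb : 0 ≤ b := norm_nonneg _
  have hr : 0 ≤ r := norm_nonneg _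
  have hu0 : (0 : ℝ) < u := by positivity
  have hu1 : (1 : ℝ) ≤ u := by nlinarith [sq_nonneg r]
  set w1 : ℝ := u ^ (-(1 / 2) : ℝ) with hw1def
  set w3 : ℝ := u ^ (-(3 / 2) : ℝ) with hw3def
  set w5 : ℝ := u ^ (-(5 / 2) : ℝ) with hw5def
  have hw1 : 0 < w1 := Real.rpow_pos_of_pos hu0 _
  have hw3 : 0 < w3 := Real.rpow_pos_of_pos hu0 _
  have hw5 : 0 < w5 := Real.rpow_pos_of_pos hu0 _
  have hw1le : w1 ≤ 1 := Real.rpow_le_one_of_one_le_of_nonpos hu1 (by norm_num)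
  have hw31 : w3 ≤ w1 := Real.rpow_le_rpow_of_exponent_le hu1 (by norm_num)
  -- r ≤ u ^ (1/2)
  have hrsq : r ≤ u ^ ((1 / 2 : ℝ)) := by
    rw [← Real.sqrt_eq_rpow]
    calc r = Real.sqrt (r ^ 2) := by rw [Real.sqrt_sq hr]
    _ ≤ Real.sqrt u := Real.sqrt_le_sqrt (by nlinarith)
  have hrw1 : r * w1 ≤ 1 := by
    calc r * w1 ≤ u ^ ((1 / 2 : ℝ)) * w1 := by
          exact mul_le_mul_of_nonneg_right hrsq hw1.le
    _ = 1 := by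
          rw [hw1def, ← Real.rpow_add hu0]
          norm_num
  have hrw3 : r * w3 ≤ 1 := le_trans (by nlinarith) hrw1
  have hr2w5 : r ^ 2 * w5 ≤ w3 := by
    have h1 : r ^ 2 * w5 ≤ u * w5 := by nlinarith
    have h2 : w3 = u * w5 := by
      rw [hw3def, hw5def, show (-(3 / 2) : ℝ) = 1 + -(5 / 2) by norm_num,
        Real.rpow_add hu0, Real.rpow_one]
    linarith
  -- the difference vector
  set d : EuclideanSpace ℝ (Fin 3) := s x - s y + (x - y) with hddef
  have hdnorm : ‖d‖ ≤ T := by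
    rw [hddef, hs x, hs y]
    exact score_diff_norm_le θ₁ θ₂ x y
  have hsx : s x = d - (x - y) + s y := by rw [hddef]; abel
  have hsyx : s y - s x = (x - y) - d := by rw [hddef]; abel
  have hinner1 : ⟪s x, s y⟫ = ⟪d, s y⟫ - ⟪x - y, s y⟫ + b ^ 2 := by
    rw [hsx, inner_add_left, inner_sub_left, hbdef, ← real_inner_self_eq_norm_sq]
  have hinner2 : ⟪s y - s x, x - y⟫ = r ^ 2 - ⟪d, x - y⟫ := by
    rw [hsyx, inner_sub_left, hrdef, ← real_inner_self_eq_norm_sq]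
  rw [hinner1, hinner2]
  set I1 : ℝ := ⟪d, s y⟫ with hI1def
  set I2 : ℝ := ⟪x - y, s y⟫ with hI2def
  set I3 : ℝ := ⟪d, x - y⟫ with hI3def
  have habs1 : |I1| ≤ T * b :=
    le_trans (abs_real_inner_le_norm d (s y)) (mul_le_mul_of_nonneg_right hdnorm hb)
  have habs2 : |I2| ≤ r * b :=
    le_trans (abs_real_inner_le_norm _ _) (le_of_eq rfl)
  have habs3 : |I3| ≤ T * r :=
    le_trans (abs_real_inner_le_norm d _) (mul_le_mul_of_nonneg_right hdnorm hr)
  have hI1lo : -(T * b) ≤ I1 := neg_le_of_abs_le habs1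
  have hI2hi : I2 ≤ r * b := le_of_abs_le habs2
  have hI3hi : I3 ≤ T * r := le_of_abs_le habs3
  clear_value T b r u w1 w3 w5 I1 I2 I3
  clear hh hs habs1 habs2 habs3 hTdef hbdef hrdef hudef hw1def hw3def hw5def hinner1 hinner2 hsx hsyx hdnorm hddef hI1def hI2def hI3def hrsq
  -- piecewise bounds
  have e1 : -(T * b) ≤ I1 * w1 := by
    have t1 : -(T * b) * w1 ≤ I1 * w1 := mul_le_mul_of_nonneg_right hI1lo hw1.le
    have t2 : T * b * w1 ≤ T * b * 1 := mul_le_mul_of_nonneg_left hw1le (mul_nonneg hT hb)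
    nlinarith
  have e2 : -b ≤ -(I2 * w1) := by
    have t1 : I2 * w1 ≤ r * b * w1 := mul_le_mul_of_nonneg_right hI2hi hw1.le
    have t2 : r * b * w1 = b * (r * w1) := by ring
    have t3 : b * (r * w1) ≤ b * 1 := mul_le_mul_of_nonneg_left hrw1 hb
    linarith
  have e3 : -T ≤ w3 * (r ^ 2 - I3) := by
    have h1 : w3 * I3 ≤ w3 * (T * r) := mul_le_mul_of_nonneg_left hI3hi hw3.le
    have h2 : T * (r * w3) ≤ T * 1 := mul_le_mul_of_nonneg_left hrw3 hT
    have h3 : (0 : ℝ) ≤ w3 * r ^ 2 := mul_nonneg hw3.le (sq_nonneg r)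
    have h4 : w3 * (r ^ 2 - I3) = w3 * r ^ 2 - w3 * I3 := by ring
    have h5 : w3 * (T * r) = T * (r * w3) := by ring
    linarith
  have e4 : (0 : ℝ) ≤ -3 * w5 * r ^ 2 + 3 * w3 := by
    have h1 : w5 * r ^ 2 = r ^ 2 * w5 := by ring
    linarith
  have e5 : (0 : ℝ) ≤ b ^ 2 * w1 := by positivity
  have expand : (I1 - I2 + b ^ 2) * w1 = I1 * w1 - I2 * w1 + b ^ 2 * w1 := by ring
  rw [expand]
  have keyg : -((T + b + 1) * b + T + 1) = -(T * b) + -b + -T - b ^ 2 - 1 := by ring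
  rw [keyg]
  have hb2 : (0 : ℝ) ≤ b ^ 2 := sq_nonneg b
  linarith
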